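/- Let (ε_{i,j})_{1 ≤ i ≤ n, 1 ≤ j ≤ k} be i.i.d. standard Laplace random variables, let k ≥ 2 and 0 < ε ≤ 1. Then P( Σ_{j=1}^k | (1/n) Σ_{i=1}^n ε_{i,j} | > ε ) ≤ 2^k · exp(−0.3·ε²·n/k). -/

import Mathlib

open MeasureTheory Set

/-- The standard Laplace distribution on `ℝ` (centred, unit variance), with density
`x ↦ (1/√2) e^{−√2|x|}` with respect to Lebesgue measure. -/
noncomputable def stdLaplace : Measure ℝ :=
  volume.withDensity fun x => ENNReal.ofReal ((Real.sqrt 2)⁻¹ * Real.exp (-(Real.sqrt 2 * |x|)))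

namespace StdLaplaceAux

open Real ProbabilityTheory

noncomputable def d (x : ℝ) : ℝ := (Real.sqrt 2)⁻¹ * Real.exp (-(Real.sqrt 2 * |x|))

lemma d_nonneg (x : ℝ) : 0 ≤ d x := by unfold d; positivity

lemma d_cont : Continuous d := by
  unfold d
  exact continuous_const.mul ((continuous_const.mul continuous_abs).neg.rexp)

lemma d_meas : Measurable d := d_cont.measurable

lemma integral_exp_neg_mul_Ioi {b : ℝ} (hb : 0 < b) :
    ∫ x : ℝ in Ioi 0, exp (-(b * x)) = b⁻¹ := by
  have := Real.integral_rpow_mul_exp_neg_mul_Ioi one_pos hb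
  simpa using this

lemma intOn_Ioi {c : ℝ} (hc : c < Real.sqrt 2) :
    IntegrableOn (fun x => Real.exp (c * x) * d x) (Ioi 0) ∧
      ∫ x in Ioi (0:ℝ), Real.exp (c * x) * d x = (Real.sqrt 2)⁻¹ * (Real.sqrt 2 - c)⁻¹ := by
  have hb : 0 < Real.sqrt 2 - c := by linarith
  have heq : EqOn (fun x => Real.exp (c * x) * d x)
      (fun x => (Real.sqrt 2)⁻¹ * Real.exp (-((Real.sqrt 2 - c) * x))) (Ioi 0) := by
    intro x hx
    simp only [d, abs_of_pos (mem_Ioi.mp hx)]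
    rw [mul_comm, mul_assoc, ← Real.exp_add]
    ring_nf
  have hI : IntegrableOn (fun x : ℝ => Real.exp (-((Real.sqrt 2 - c) * x))) (Ioi 0) := by
    have := exp_neg_integrableOn_Ioi 0 hb
    simp only [neg_mul] at this
    exact this
  constructor
  · rw [integrableOn_congr_fun heq measurableSet_Ioi]
    exact hI.const_mul ((Real.sqrt 2)⁻¹)
  · rw [setIntegral_congr_fun measurableSet_Ioi heq, integral_const_mul,
      integral_exp_neg_mul_Ioi hb]

lemma intOn_Iic {c : ℝ} (hc : -Real.sqrt 2 < c) :
    IntegrableOn (fun x => Real.exp (c * x) * d x) (Iic 0) ∧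
      ∫ x in Iic (0:ℝ), Real.exp (c * x) * d x = (Real.sqrt 2)⁻¹ * (Real.sqrt 2 + c)⁻¹ := by
  have hc' : -c < Real.sqrt 2 := by linarith
  obtain ⟨hint, hval⟩ := intOn_Ioi hc'
  have m : MeasurableEmbedding fun x : ℝ => -x :=
    (Homeomorph.neg ℝ).measurableEmbedding
  have hdneg : ∀ x : ℝ, d (-x) = d x := fun x => by simp [d]
  constructor
  · rw [← Measure.map_neg_eq_self (volume : Measure ℝ), m.integrableOn_map_iff]
    have hcomp : (fun x : ℝ => Real.exp (c * x) * d x) ∘ (fun x : ℝ => -x)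
        = fun x : ℝ => Real.exp ((-c) * x) * d x := by
      funext x; simp [Function.comp, hdneg x, neg_mul, mul_neg]
    rw [hcomp]
    have hset : (fun x : ℝ => -x) ⁻¹' (Iic 0) = Ici 0 := by
      ext x; simp
    rw [hset, integrableOn_Ici_iff_integrableOn_Ioi]
    exact hint
  · have h2 := integral_comp_neg_Iic (0:ℝ) (fun y => Real.exp (-c * y) * d y)
    simp only [neg_zero] at h2
    have h3 : ∫ x in Iic (0:ℝ), Real.exp (c * x) * d x
        = ∫ x in Iic (0:ℝ), (fun y => Real.exp (-c * y) * d y) (-x) := by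
      refine setIntegral_congr_fun measurableSet_Iic fun x _ => ?_
      simp [hdneg, neg_mul, mul_neg]
    rw [h3, h2, hval]
    ring_nf

lemma integrable_full {c : ℝ} (hc : |c| < Real.sqrt 2) :
    Integrable (fun x => Real.exp (c * x) * d x) := by
  obtain ⟨h1, h2⟩ := abs_lt.mp hc
  have := ((intOn_Iic h1).1.union (intOn_Ioi h2).1)
  rwa [Iic_union_Ioi, integrableOn_univ] at this

lemma integral_full {c : ℝ} (hc : |c| < Real.sqrt 2) :
    ∫ x : ℝ, Real.exp (c * x) * d x = (1 - c ^ 2 / 2)⁻¹ := by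
  obtain ⟨h1, h2⟩ := abs_lt.mp hc
  have hsplit : ∫ x : ℝ, Real.exp (c * x) * d x
      = (∫ x in Iic (0:ℝ), Real.exp (c * x) * d x)
        + ∫ x in Ioi (0:ℝ), Real.exp (c * x) * d x := by
    rw [← setIntegral_union (Iic_disjoint_Ioi le_rfl) measurableSet_Ioi (intOn_Iic h1).1
      (intOn_Ioi h2).1, Iic_union_Ioi, setIntegral_univ]
  rw [hsplit, (intOn_Iic h1).2, (intOn_Ioi h2).2]
  have hs : Real.sqrt 2 ^ 2 = 2 := Real.sq_sqrt (by norm_num)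
  have hs0 : 0 < Real.sqrt 2 := Real.sqrt_pos.mpr (by norm_num)
  have hm : 0 < Real.sqrt 2 - c := by linarith
  have hp : 0 < Real.sqrt 2 + c := by linarith
  have hq : 0 < 1 - c ^ 2 / 2 := by nlinarith
  have h2c : (2:ℝ) - c ^ 2 ≠ 0 := by nlinarith
  field_simp
  nlinarith [hs, hs0, hm, hp, sq_nonneg c, sq_nonneg (Real.sqrt 2)]

lemma d_meas_ennreal :
    Measurable fun x : ℝ => ENNReal.ofReal ((Real.sqrt 2)⁻¹ * Real.exp (-(Real.sqrt 2 * |x|))) :=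
  ENNReal.measurable_ofReal.comp d_meas

lemma stdLaplace_eq : stdLaplace = volume.withDensity fun x => ((d x).toNNReal : ENNReal) := rfl

lemma integrable_exp_stdLaplace {c : ℝ} (hc : |c| < Real.sqrt 2) :
    Integrable (fun x => Real.exp (c * x)) stdLaplace := by
  have hf : Measurable fun x : ℝ => ENNReal.ofReal (d x) :=
    ENNReal.measurable_ofReal.comp d_meas
  rw [show stdLaplace = volume.withDensity fun x => ENNReal.ofReal (d x) from rfl,
    integrable_withDensity_iff hf (ae_of_all _ fun x => ENNReal.ofReal_lt_top)]
  have : (fun x => Real.exp (c * x) * (ENNReal.ofReal (d x)).toReal)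
      = fun x => Real.exp (c * x) * d x := by
    funext x; rw [ENNReal.toReal_ofReal (d_nonneg x)]
  rw [this]
  exact integrable_full hc

lemma integral_exp_stdLaplace {c : ℝ} (hc : |c| < Real.sqrt 2) :
    ∫ x, Real.exp (c * x) ∂stdLaplace = (1 - c ^ 2 / 2)⁻¹ := by
  rw [stdLaplace_eq, integral_withDensity_eq_integral_smul (d_meas.real_toNNReal)]
  have heq2 : (fun x => (d x).toNNReal • Real.exp (c * x))
      = fun x => Real.exp (c * x) * d x := by
    funext x
    rw [NNReal.smul_def, Real.coe_toNNReal _ (d_nonneg x), smul_eq_mul]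
    ring
  rw [heq2, integral_full hc]

end StdLaplaceAux


namespace StdLaplaceAux

/-- sign pattern -/
noncomputable def sgn {k : ℕ} (T : Finset (Fin k)) (j : Fin k) : ℝ := if j ∈ T then 1 else -1

lemma sgn_sq {k : ℕ} (T : Finset (Fin k)) (j : Fin k) : sgn T j ^ 2 = 1 := by
  unfold sgn; by_cases h : j ∈ T <;> simp [h]

lemma abs_sgn {k : ℕ} (T : Finset (Fin k)) (j : Fin k) : |sgn T j| = 1 := by
  unfold sgn; by_cases h : j ∈ T <;> simp [h]

lemma one_lt_sqrt_two : (1:ℝ) < Real.sqrt 2 := by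
  rw [show (1:ℝ) = Real.sqrt 1 from (Real.sqrt_one).symm]
  exact Real.sqrt_lt_sqrt (by norm_num) (by norm_num)

end StdLaplaceAux

set_option maxHeartbeats 1000000 in
/-- If `(ε_{i,j})` for `1 ≤ i ≤ n`, `1 ≤ j ≤ k` are i.i.d. standard Laplace,
`k ≥ 2` and `0 < ε ≤ 1`, then
`P(Σ_j |(1/n) Σ_i ε_{i,j}| > ε) ≤ 2^k · exp(−0.3 ε² n / k)`. -/
theorem laplace_array_deviation_bound
    {Ω : Type*} [MeasurableSpace Ω] (P : Measure Ω) [IsProbabilityMeasure P]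
    {n k : ℕ} (hn : 0 < n) (hk : 2 ≤ k)
    (ε : Fin n × Fin k → Ω → ℝ) (hmeas : ∀ p, Measurable (ε p))
    (hlaw : ∀ p, P.map (ε p) = stdLaplace)
    (hindep : ProbabilityTheory.iIndepFun ε P)
    (e : ℝ) (he0 : 0 < e) (he1 : e ≤ 1) :
    (P {ω | (∑ j : Fin k, |(n : ℝ)⁻¹ * ∑ i : Fin n, ε (i, j) ω|) > e}).toReal
      ≤ 2 ^ k * Real.exp (-0.3 * e ^ 2 * n / k) := by
  classical
  open ProbabilityTheory StdLaplaceAux Real in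
  have hk0 : (0:ℝ) < k := by positivity
  have hk2 : (2:ℝ) ≤ k := by exact_mod_cast hk
  have hn0 : (0:ℝ) < n := by exact_mod_cast hn
  set t : ℝ := e / (2 * k) with ht_def
  have ht0 : 0 < t := by positivity
  have htq : t ≤ 1/4 := by
    rw [ht_def, div_le_iff₀ (by positivity)]
    nlinarith
  set S : Fin k → Ω → ℝ := fun j ω => ∑ i : Fin n, ε (i, j) ω with hS
  set X : Ω → ℝ := fun ω => ∑ j : Fin k, |S j ω| with hX
  have hSmeas : ∀ j, Measurable (S j) := fun j =>
    Finset.measurable_sum _ fun i _ => hmeas (i, j)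
  have hXmeas : Measurable X :=
    Finset.measurable_sum _ fun j _ => (hSmeas j).abs
  have hYmeas : ∀ (T : Finset (Fin k)) (p : Fin n × Fin k),
      Measurable (fun ω => sgn T p.2 * ε p ω) := fun T p => (hmeas p).const_mul _
  have hindepY : ∀ T : Finset (Fin k),
      iIndepFun (fun p ω => sgn T p.2 * ε p ω) P := by
    intro T
    exact hindep.comp (fun p x => sgn T p.2 * x) (fun p => measurable_const_mul _)
  have habs : ∀ (T : Finset (Fin k)) (p : Fin n × Fin k), |t * sgn T p.2| < Real.sqrt 2 := by
    intro T p
    rw [abs_mul, abs_sgn, mul_one, abs_of_pos ht0]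
    have := StdLaplaceAux.one_lt_sqrt_two
    linarith
  have hintY : ∀ (T : Finset (Fin k)) (p : Fin n × Fin k),
      Integrable (fun ω => Real.exp (t * (sgn T p.2 * ε p ω))) P := by
    intro T p
    have h1 : Integrable (fun x => Real.exp ((t * sgn T p.2) * x)) stdLaplace :=
      integrable_exp_stdLaplace (habs T p)
    have h2 : Integrable (fun x => Real.exp ((t * sgn T p.2) * x)) (P.map (ε p)) := by
      rw [hlaw p]; exact h1
    have h3 := (integrable_map_measure h2.1 (hmeas p).aemeasurable).mp h2
    have : ((fun x => Real.exp ((t * sgn T p.2) * x)) ∘ ε p)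
        = fun ω => Real.exp (t * (sgn T p.2 * ε p ω)) := by
      funext ω; simp [Function.comp, mul_assoc]
    rwa [this] at h3
  have hmgfY : ∀ (T : Finset (Fin k)) (p : Fin n × Fin k),
      mgf (fun ω => sgn T p.2 * ε p ω) P t = (1 - t^2/2)⁻¹ := by
    intro T p
    have hcont : AEStronglyMeasurable (fun x => Real.exp ((t * sgn T p.2) * x)) (P.map (ε p)) :=
      (Real.continuous_exp.comp (continuous_const.mul continuous_id)).aestronglyMeasurable
    calc mgf (fun ω => sgn T p.2 * ε p ω) P t
        = ∫ ω, Real.exp ((t * sgn T p.2) * ε p ω) ∂P := by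
          unfold mgf; congr 1; funext ω; rw [mul_assoc]
      _ = ∫ x, Real.exp ((t * sgn T p.2) * x) ∂(P.map (ε p)) :=
          (integral_map (hmeas p).aemeasurable hcont).symm
      _ = (1 - (t * sgn T p.2)^2/2)⁻¹ := by
          rw [hlaw p]; exact integral_exp_stdLaplace (habs T p)
      _ = (1 - t^2/2)⁻¹ := by rw [mul_pow, sgn_sq, mul_one]
  have hintsum : ∀ T : Finset (Fin k),
      Integrable (fun ω => Real.exp (t * (∑ p : Fin n × Fin k, fun ω' => sgn T p.2 * ε p ω') ω)) P :=
    fun T => iIndepFun.integrable_exp_mul_sum (hindepY T) (hYmeas T) (fun p _ => hintY T p)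
  have hptw : ∀ ω, Real.exp (t * X ω)
      ≤ ∑ T : Finset (Fin k),
          Real.exp (t * (∑ p : Fin n × Fin k, fun ω' => sgn T p.2 * ε p ω') ω) := by
    intro ω
    have h1 : Real.exp (t * X ω) = ∏ j : Fin k, Real.exp (t * |S j ω|) := by
      rw [← Real.exp_sum, ← Finset.mul_sum]
    have h2 : ∀ j : Fin k, Real.exp (t * |S j ω|)
        ≤ Real.exp (t * S j ω) + Real.exp (-(t * S j ω)) := by
      intro j
      rcases abs_choice (S j ω) with h | h
      · rw [h]
        nlinarith [Real.exp_pos (-(t * S j ω))]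
      · rw [h, mul_neg]
        nlinarith [Real.exp_pos (t * S j ω)]
    have h3 : ∏ j : Fin k, Real.exp (t * |S j ω|)
        ≤ ∏ j : Fin k, (Real.exp (t * S j ω) + Real.exp (-(t * S j ω))) :=
      Finset.prod_le_prod (fun j _ => (Real.exp_pos _).le) (fun j _ => h2 j)
    have h4 : ∏ j : Fin k, (Real.exp (t * S j ω) + Real.exp (-(t * S j ω)))
        = ∑ T ∈ (Finset.univ : Finset (Fin k)).powerset,
            (∏ j ∈ T, Real.exp (t * S j ω)) * ∏ j ∈ Finset.univ \ T, Real.exp (-(t * S j ω)) :=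
      Finset.prod_add _ _ _
    have h5 : ∀ T : Finset (Fin k),
        (∏ j ∈ T, Real.exp (t * S j ω)) * ∏ j ∈ Finset.univ \ T, Real.exp (-(t * S j ω))
        = Real.exp (t * (∑ p : Fin n × Fin k, fun ω' => sgn T p.2 * ε p ω') ω) := by
      intro T
      have e1 : (∑ p : Fin n × Fin k, fun ω' => sgn T p.2 * ε p ω') ω
          = ∑ j : Fin k, sgn T j * S j ω := by
        rw [Finset.sum_apply]
        rw [Fintype.sum_prod_type_right]
        exact Finset.sum_congr rfl fun j _ => by rw [hS]; simp [Finset.mul_sum]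
      rw [e1, Finset.mul_sum, Real.exp_sum]
      conv_rhs => rw [show (Finset.univ : Finset (Fin k)) = T ∪ (Finset.univ \ T) from
        (Finset.union_sdiff_of_subset (Finset.subset_univ T)).symm]
      rw [Finset.prod_union Finset.disjoint_sdiff]
      congr 1
      · exact Finset.prod_congr rfl fun j hj => by simp [sgn, hj]
      · refine Finset.prod_congr rfl fun j hj => ?_
        have hnj : j ∉ T := (Finset.mem_sdiff.mp hj).2
        simp [sgn, hnj, mul_neg, neg_mul]
    calc Real.exp (t * X ω)
        ≤ ∏ j : Fin k, (Real.exp (t * S j ω) + Real.exp (-(t * S j ω))) := by rw [h1]; exact h3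
      _ = ∑ T ∈ (Finset.univ : Finset (Fin k)).powerset,
            (∏ j ∈ T, Real.exp (t * S j ω)) * ∏ j ∈ Finset.univ \ T, Real.exp (-(t * S j ω)) := h4
      _ = ∑ T : Finset (Fin k),
          Real.exp (t * (∑ p : Fin n × Fin k, fun ω' => sgn T p.2 * ε p ω') ω) := by
          rw [Finset.powerset_univ]
          exact Finset.sum_congr rfl fun T _ => h5 T
  have hg : Integrable (fun ω => ∑ T : Finset (Fin k),
      Real.exp (t * (∑ p : Fin n × Fin k, fun ω' => sgn T p.2 * ε p ω') ω)) P :=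
    integrable_finset_sum _ (fun T _ => hintsum T)
  have hintX : Integrable (fun ω => Real.exp (t * X ω)) P := by
    refine hg.mono' ((hXmeas.const_mul t).exp).aestronglyMeasurable (ae_of_all _ fun ω => ?_)
    rw [Real.norm_eq_abs, abs_of_pos (Real.exp_pos _)]
    exact hptw ω
  have hpos : (0:ℝ) < 1 - t^2/2 := by nlinarith
  have hmgfX : mgf X P t ≤ 2^k * ((1 - t^2/2)⁻¹)^(n*k) := by
    have h2 : ∀ T : Finset (Fin k),
        ∫ ω, Real.exp (t * (∑ p : Fin n × Fin k, fun ω' => sgn T p.2 * ε p ω') ω) ∂P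
          = ((1 - t^2/2)⁻¹)^(n*k) := by
      intro T
      have hms := iIndepFun.mgf_sum (hindepY T) (hYmeas T) Finset.univ (t := t)
      calc ∫ ω, Real.exp (t * (∑ p : Fin n × Fin k, fun ω' => sgn T p.2 * ε p ω') ω) ∂P
          = mgf (∑ p : Fin n × Fin k, fun ω' => sgn T p.2 * ε p ω') P t := rfl
        _ = ∏ p : Fin n × Fin k, mgf (fun ω' => sgn T p.2 * ε p ω') P t := hms
        _ = ((1 - t^2/2)⁻¹)^(n*k) := by
            rw [Finset.prod_congr rfl (fun p _ => hmgfY T p), Finset.prod_const,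
              Finset.card_univ, Fintype.card_prod, Fintype.card_fin, Fintype.card_fin]
    calc mgf X P t ≤ ∫ ω, (∑ T : Finset (Fin k),
          Real.exp (t * (∑ p : Fin n × Fin k, fun ω' => sgn T p.2 * ε p ω') ω)) ∂P :=
          integral_mono hintX hg hptw
      _ = ∑ T : Finset (Fin k),
          ∫ ω, Real.exp (t * (∑ p : Fin n × Fin k, fun ω' => sgn T p.2 * ε p ω') ω) ∂P :=
          integral_finset_sum _ (fun T _ => hintsum T)
      _ = ∑ T : Finset (Fin k), ((1 - t^2/2)⁻¹)^(n*k) :=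
          Finset.sum_congr rfl fun T _ => h2 T
      _ = 2^k * ((1 - t^2/2)⁻¹)^(n*k) := by
          rw [Finset.sum_const, Finset.card_univ, Fintype.card_finset, Fintype.card_fin,
            nsmul_eq_mul]
          push_cast
          ring
  have hsub : {ω | (∑ j : Fin k, |(n : ℝ)⁻¹ * ∑ i : Fin n, ε (i, j) ω|) > e}
      ⊆ {ω | (n:ℝ) * e ≤ X ω} := by
    intro ω hω
    simp only [mem_setOf_eq] at hω ⊢
    have h1 : (∑ j : Fin k, |(n : ℝ)⁻¹ * ∑ i : Fin n, ε (i, j) ω|) = (n:ℝ)⁻¹ * X ω := by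
      simp only [hX, hS]
      conv_rhs => rw [Finset.mul_sum]
      refine Finset.sum_congr rfl fun j _ => ?_
      rw [abs_mul, abs_of_nonneg (by positivity : (0:ℝ) ≤ (n:ℝ)⁻¹)]
    rw [h1] at hω
    have hx : (n:ℝ) * e < X ω := by
      have := mul_lt_mul_of_pos_left hω hn0
      rwa [← mul_assoc, mul_inv_cancel₀ hn0.ne', one_mul] at this
    exact hx.le
  have hchern := measure_ge_le_exp_mul_mgf (μ := P) (X := X) ((n:ℝ) * e) ht0.le hintX
  have hmono : (P {ω | (∑ j : Fin k, |(n : ℝ)⁻¹ * ∑ i : Fin n, ε (i, j) ω|) > e}).toReal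
      ≤ (P {ω | (n:ℝ) * e ≤ X ω}).toReal :=
    ENNReal.toReal_mono (measure_ne_top _ _) (measure_mono hsub)
  refine hmono.trans (hchern.trans ?_)
  have step1 : Real.exp (-t * ((n:ℝ) * e)) * mgf X P t
      ≤ Real.exp (-t * ((n:ℝ) * e)) * (2^k * ((1 - t^2/2)⁻¹)^(n*k)) :=
    mul_le_mul_of_nonneg_left hmgfX (Real.exp_pos _).le
  refine step1.trans ?_
  -- numeric estimates
  have hu : t^2/2 ≤ 1/32 := by nlinarith
  have hinv : (1 - t^2/2)⁻¹ ≤ Real.exp ((32/31) * (t^2/2)) := by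
    have h1 : (1 - t^2/2)⁻¹ ≤ 1 + (32/31) * (t^2/2) := by
      rw [inv_eq_one_div, div_le_iff₀ hpos]
      nlinarith
    refine h1.trans ?_
    have := Real.add_one_le_exp ((32/31) * (t^2/2))
    linarith
  have hpowle : ((1 - t^2/2)⁻¹)^(n*k) ≤ (Real.exp ((32/31) * (t^2/2)))^(n*k) :=
    pow_le_pow_left₀ (inv_nonneg.mpr hpos.le) hinv _
  have hpowexp : (Real.exp ((32/31) * (t^2/2)))^(n*k)
      = Real.exp (((n*k : ℕ) : ℝ) * ((32/31) * (t^2/2))) := by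
    rw [Real.exp_nat_mul]
  have hexpineq : -t * ((n:ℝ) * e) + ((n*k : ℕ) : ℝ) * ((32/31) * (t^2/2))
      ≤ -0.3 * e^2 * n / k := by
    have hA : (0:ℝ) ≤ e^2 * n / k := by positivity
    have hLHS : -t * ((n:ℝ) * e) + ((n*k : ℕ) : ℝ) * ((32/31) * (t^2/2))
        = -(23/62) * (e^2 * n / k) := by
      push_cast
      rw [ht_def]
      field_simp
      ring
    have hRHS : -0.3 * e^2 * n / k = -(3/10) * (e^2 * n / k) := by
      rw [show (-0.3 : ℝ) = -(3/10) by norm_num]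
      ring
    rw [hLHS, hRHS]
    linarith [mul_le_mul_of_nonneg_right (by norm_num : (3/10:ℝ) ≤ 23/62) hA]
  calc Real.exp (-t * ((n:ℝ) * e)) * (2^k * ((1 - t^2/2)⁻¹)^(n*k))
      ≤ Real.exp (-t * ((n:ℝ) * e)) * (2^k * Real.exp (((n*k : ℕ) : ℝ) * ((32/31) * (t^2/2)))) := by
        rw [← hpowexp]
        exact mul_le_mul_of_nonneg_left (mul_le_mul_of_nonneg_left hpowle (by positivity))
          (Real.exp_pos _).le
    _ = 2^k * Real.exp (-t * ((n:ℝ) * e) + ((n*k : ℕ) : ℝ) * ((32/31) * (t^2/2))) := by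
        rw [Real.exp_add]; ring
    _ ≤ 2^k * Real.exp (-0.3 * e^2 * n / k) := by
        have h := Real.exp_le_exp.mpr hexpineq
        exact mul_le_mul_of_nonneg_left h (by positivity)
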